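/- arXiv:1102.3642 — 2 statements merged into one kernel-verified Lean document; each statement's English description precedes it below -/
import Mathlib

section
/- Let X and Y be l-dimensional linear subspaces of ℝ^n with orthonormal bases (e_1,…,e_l) ⊂ X and (f_1,…,f_l) ⊂ Y such that |e_j − f_j| ≤ α for each j = 1,…,l. Then the operator norm of π_X − π_Y (where π_X, π_Y are the orthogonal projections onto X and Y) is at most 2lα. -/
open scoped RealInnerProductSpace

/-- The orthogonal projection onto a subspace of Euclidean space, viewed as a
continuous linear endomorphism of the ambient space. -/
noncomputable def projL {n : ℕ} (X : Submodule ℝ (EuclideanSpace ℝ (Fin n))) :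
    EuclideanSpace ℝ (Fin n) →L[ℝ] EuclideanSpace ℝ (Fin n) :=
  X.subtypeL.comp (Submodule.orthogonalProjection X)

lemma projL_eq_sum {n l : ℕ} (X : Submodule ℝ (EuclideanSpace ℝ (Fin n)))
    (e : Fin l → EuclideanSpace ℝ (Fin n)) (he : Orthonormal ℝ e)
    (heX : Submodule.span ℝ (Set.range e) = X) (x : EuclideanSpace ℝ (Fin n)) :
    projL X x = ∑ j, ⟪e j, x⟫ • e j := by
  have hmem : ∀ j, e j ∈ X := fun j => heX ▸ Submodule.subset_span (Set.mem_range_self j)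
  let e' : Fin l → X := Set.codRestrict e X hmem
  have he' : Orthonormal ℝ e' := he.codRestrict X hmem
  have hsp : ⊤ ≤ Submodule.span ℝ (Set.range e') := by
    have hmap : Submodule.map X.subtype (Submodule.span ℝ (Set.range e')) = X := by
      rw [Submodule.map_span, ← Set.range_comp]
      have : X.subtype ∘ e' = e := rfl
      rw [this, heX]
    rintro ⟨x, hx⟩ -
    have hx' : x ∈ Submodule.map X.subtype (Submodule.span ℝ (Set.range e')) := by
      rw [hmap]; exact hx
    obtain ⟨⟨y, hy⟩, hy', hyx⟩ := hx'
    have : (⟨x, hx⟩ : X) = ⟨y, hy⟩ := Subtype.ext hyx.symm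
    rw [this]; exact hy'
  let b : OrthonormalBasis (Fin l) ℝ X := OrthonormalBasis.mk he' hsp
  have hb : ∀ j, b j = e' j := fun j => by simp [b, OrthonormalBasis.coe_mk]
  have := b.orthogonalProjectionOnto_apply_eq_sum x
  have : (projL X x : EuclideanSpace ℝ (Fin n)) =
      ((∑ j, ⟪(b j : EuclideanSpace ℝ (Fin n)), x⟫ • b j : X) : EuclideanSpace ℝ (Fin n)) := by
    simp [projL, this]
  rw [this]
  push_cast
  congr 1
  ext j
  simp [hb, e']

/-- If `X` and `Y` are `l`-dimensional subspaces of `ℝ^n` with orthonormal bases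
`e` and `f` satisfying `‖e j − f j‖ ≤ α`, then `‖π_X − π_Y‖ ≤ 2 l α`. -/
theorem angle_le_of_close_orthonormal_bases {n l : ℕ}
    (X Y : Submodule ℝ (EuclideanSpace ℝ (Fin n)))
    (hX : Module.finrank ℝ X = l) (hY : Module.finrank ℝ Y = l)
    (e f : Fin l → EuclideanSpace ℝ (Fin n))
    (he : Orthonormal ℝ e) (hf : Orthonormal ℝ f)
    (heX : Submodule.span ℝ (Set.range e) = X)
    (hfY : Submodule.span ℝ (Set.range f) = Y)
    (α : ℝ) (hα : ∀ j, ‖e j - f j‖ ≤ α) :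
    ‖projL X - projL Y‖ ≤ 2 * l * α := by
  have hnn : (0 : ℝ) ≤ 2 * l * α := by
    rcases Nat.eq_zero_or_pos l with h | h
    · simp [h]
    · have : (0 : ℝ) ≤ α := le_trans (norm_nonneg _) (hα ⟨0, h⟩)
      positivity
  refine ContinuousLinearMap.opNorm_le_bound _ hnn fun x => ?_
  rw [ContinuousLinearMap.sub_apply, projL_eq_sum X e he heX x, projL_eq_sum Y f hf hfY x,
    ← Finset.sum_sub_distrib]
  calc ‖∑ j, (⟪e j, x⟫ • e j - ⟪f j, x⟫ • f j)‖
      ≤ ∑ j : Fin l, (2 * α * ‖x‖) := by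
        refine norm_sum_le_of_le _ fun j _ => ?_
        have hterm : ⟪e j, x⟫ • e j - ⟪f j, x⟫ • f j
            = ⟪e j - f j, x⟫ • e j + ⟪f j, x⟫ • (e j - f j) := by
          rw [inner_sub_left]
          module
        rw [hterm]
        have hej : ‖e j‖ = 1 := he.1 j
        have hfj : ‖f j‖ = 1 := hf.1 j
        have h1 : ‖⟪e j - f j, x⟫ • e j‖ ≤ α * ‖x‖ := by
          rw [norm_smul, hej, mul_one]
          calc ‖⟪e j - f j, x⟫‖ ≤ ‖e j - f j‖ * ‖x‖ := norm_inner_le_norm _ _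
            _ ≤ α * ‖x‖ := by gcongr; exact hα j
        have h2 : ‖⟪f j, x⟫ • (e j - f j)‖ ≤ α * ‖x‖ := by
          rw [norm_smul]
          calc ‖⟪f j, x⟫‖ * ‖e j - f j‖ ≤ (‖f j‖ * ‖x‖) * α :=
                mul_le_mul (norm_inner_le_norm _ _) (hα j) (norm_nonneg _)
                  (by positivity)
            _ = α * ‖x‖ := by rw [hfj]; ring
        calc ‖⟪e j - f j, x⟫ • e j + ⟪f j, x⟫ • (e j - f j)‖
            ≤ ‖⟪e j - f j, x⟫ • e j‖ + ‖⟪f j, x⟫ • (e j - f j)‖ := norm_add_le _ _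
          _ ≤ α * ‖x‖ + α * ‖x‖ := add_le_add h1 h2
          _ = 2 * α * ‖x‖ := by ring
    _ = 2 * l * α * ‖x‖ := by
        rw [Finset.sum_const, Finset.card_univ, Fintype.card_fin, nsmul_eq_mul]; ring
end

section
/- Let ε₁ = 10^{-1}(10^m+1)^{-1}. Suppose e_1,…,e_m ∈ ℝ^n are orthonormal, h_i ∈ B(e_i, δ) with δ < ε₁/2, and w_i ∈ B(h_i, ε) with ε < ε₁/2, for i = 1,…,m. Then H = span(h_1,…,h_m) and W = span(w_1,…,w_m) are both m-dimensional, and ∠(H,W) ≤ c₃ ε with c₃ = 14m·20^m. -/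
open scoped RealInnerProductSpace

lemma projL_apply {n : ℕ} (X : Submodule ℝ (EuclideanSpace ℝ (Fin n)))
    (x : EuclideanSpace ℝ (Fin n)) : projL X x = (Submodule.orthogonalProjection X x : _) := rfl

lemma projL_mem {n : ℕ} (X : Submodule ℝ (EuclideanSpace ℝ (Fin n)))
    (x : EuclideanSpace ℝ (Fin n)) : projL X x ∈ X := SetLike.coe_mem _

lemma aux_norm_sum_orthonormal {n m : ℕ} {e : Fin m → EuclideanSpace ℝ (Fin n)}
    (he : Orthonormal ℝ e) (a : Fin m → ℝ) :
    ‖∑ i, a i • e i‖ ^ 2 = ∑ i, a i ^ 2 := by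
  rw [← real_inner_self_eq_norm_sq, he.inner_sum]
  simp [sq]

lemma aux_lower {n m : ℕ} {e u : Fin m → EuclideanSpace ℝ (Fin n)}
    (he : Orthonormal ℝ e) {r : ℝ} (hr0 : 0 ≤ r) (hr : ∀ i, ‖u i - e i‖ ≤ r)
    (hmr : (m : ℝ) * r ≤ 1 / 2) (a : Fin m → ℝ) :
    Real.sqrt (∑ i, a i ^ 2) ≤ 2 * ‖∑ i, a i • u i‖ := by
  set s := Real.sqrt (∑ i, a i ^ 2) with hs
  have hs0 : 0 ≤ s := Real.sqrt_nonneg _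
  have hae : ‖∑ i, a i • e i‖ = s := by
    rw [hs, ← aux_norm_sum_orthonormal he a, Real.sqrt_sq (norm_nonneg _)]
  have hai : ∀ i, |a i| ≤ s := fun i => by
    rw [hs, ← Real.sqrt_sq_eq_abs]
    exact Real.sqrt_le_sqrt (Finset.single_le_sum (f := fun i => a i ^ 2)
      (fun i _ => sq_nonneg _) (Finset.mem_univ i))
  have hdiff : ‖(∑ i, a i • u i) - ∑ i, a i • e i‖ ≤ s / 2 := by
    rw [← Finset.sum_sub_distrib]
    calc ‖∑ i, (a i • u i - a i • e i)‖ ≤ ∑ i, ‖a i • u i - a i • e i‖ :=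
          norm_sum_le _ _
      _ ≤ ∑ _i : Fin m, s * r := by
          refine Finset.sum_le_sum fun i _ => ?_
          rw [← smul_sub, norm_smul, Real.norm_eq_abs]
          exact mul_le_mul (hai i) (hr i) (norm_nonneg _) hs0
      _ = (m : ℝ) * r * s := by
          rw [Finset.sum_const, Finset.card_univ, Fintype.card_fin, nsmul_eq_mul]; ring
      _ ≤ s / 2 := by nlinarith
  have h1 : ‖∑ i, a i • e i‖ - ‖∑ i, a i • u i‖ ≤ ‖(∑ i, a i • e i) - ∑ i, a i • u i‖ :=
    norm_sub_norm_le _ _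
  rw [norm_sub_rev] at h1
  rw [hae] at h1
  linarith

lemma aux_dist {n m : ℕ} {e u v : Fin m → EuclideanSpace ℝ (Fin n)}
    (he : Orthonormal ℝ e) {r ε : ℝ} (hr0 : 0 ≤ r) (hε0 : 0 ≤ ε)
    (hr : ∀ i, ‖u i - e i‖ ≤ r) (hmr : (m : ℝ) * r ≤ 1 / 2)
    (hv : ∀ i, ‖v i - u i‖ ≤ ε)
    {x : EuclideanSpace ℝ (Fin n)} (hx : x ∈ Submodule.span ℝ (Set.range u)) :
    ∃ y ∈ Submodule.span ℝ (Set.range v), ‖x - y‖ ≤ 2 * m * ε * ‖x‖ := by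
  obtain ⟨a, rfl⟩ := (Submodule.mem_span_range_iff_exists_fun ℝ).1 hx
  refine ⟨∑ i, a i • v i, Submodule.sum_mem _ fun i _ =>
    Submodule.smul_mem _ _ (Submodule.subset_span ⟨i, rfl⟩), ?_⟩
  set s := Real.sqrt (∑ i, a i ^ 2) with hs
  have hs0 : 0 ≤ s := Real.sqrt_nonneg _
  have hai : ∀ i, |a i| ≤ s := fun i => by
    rw [hs, ← Real.sqrt_sq_eq_abs]
    exact Real.sqrt_le_sqrt (Finset.single_le_sum (f := fun i => a i ^ 2)
      (fun i _ => sq_nonneg _) (Finset.mem_univ i))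
  have hlow : s ≤ 2 * ‖∑ i, a i • u i‖ := aux_lower he hr0 hr hmr a
  calc ‖(∑ i, a i • u i) - ∑ i, a i • v i‖ = ‖∑ i, (a i • u i - a i • v i)‖ := by
        rw [← Finset.sum_sub_distrib]
    _ ≤ ∑ i, ‖a i • u i - a i • v i‖ := norm_sum_le _ _
    _ ≤ ∑ _i : Fin m, s * ε := by
        refine Finset.sum_le_sum fun i _ => ?_
        rw [← smul_sub, norm_smul, Real.norm_eq_abs, norm_sub_rev]
        exact mul_le_mul (hai i) (hv i) (norm_nonneg _) hs0
    _ = (m : ℝ) * s * ε := by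
        rw [Finset.sum_const, Finset.card_univ, Fintype.card_fin, nsmul_eq_mul]; ring
    _ ≤ (m : ℝ) * (2 * ‖∑ i, a i • u i‖) * ε := by
        apply mul_le_mul_of_nonneg_right
          (mul_le_mul_of_nonneg_left hlow (Nat.cast_nonneg m)) hε0
    _ = 2 * m * ε * ‖∑ i, a i • u i‖ := by ring

lemma aux_proj_le {n : ℕ} (W : Submodule ℝ (EuclideanSpace ℝ (Fin n)))
    (x y : EuclideanSpace ℝ (Fin n)) (hy : y ∈ W) :
    ‖x - projL W x‖ ≤ ‖x - y‖ := by
  rw [show projL W x = W.starProjection x from rfl, Submodule.starProjection_minimal]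
  exact ciInf_le ⟨0, fun z ⟨w, hw⟩ => hw ▸ norm_nonneg _⟩ (⟨y, hy⟩ : W)

lemma aux_pyth {n : ℕ} (K : Submodule ℝ (EuclideanSpace ℝ (Fin n)))
    (z : EuclideanSpace ℝ (Fin n)) :
    ‖projL K z‖ ^ 2 + ‖z - projL K z‖ ^ 2 = ‖z‖ ^ 2 := by
  have h0 : ⟪projL K z, z - projL K z⟫ = 0 :=
    Submodule.inner_right_of_mem_orthogonal (projL_mem K z)
      (Submodule.sub_starProjection_mem_orthogonal (K := K) z)
  have key := norm_add_sq_real (projL K z) (z - projL K z)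
  have hz : projL K z + (z - projL K z) = z := by abel
  rw [hz, h0] at key
  linarith

lemma aux_proj_norm_le {n : ℕ} (K : Submodule ℝ (EuclideanSpace ℝ (Fin n)))
    (z : EuclideanSpace ℝ (Fin n)) :
    ‖projL K z‖ ≤ ‖z‖ ∧ ‖z - projL K z‖ ≤ ‖z‖ := by
  have := aux_pyth K z
  constructor <;> nlinarith [norm_nonneg (projL K z), norm_nonneg (z - projL K z),
    norm_nonneg z]

set_option maxHeartbeats 1000000 in
/-- If `e_1, …, e_m` are orthonormal, `h_i ∈ B(e_i, δ)` with `δ < ε₁/2`, and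
`w_i ∈ B(h_i, ε)` with `ε < ε₁/2` (where `ε₁ = 1/(10(10^m+1))`), then
`H = span(h_i)` and `W = span(w_i)` are `m`-dimensional and
`∠(H,W) ≤ c₃ ε` with `c₃ = 14m·20^m`. -/
theorem angle_double_perturbation {n m : ℕ}
    (e h w : Fin m → EuclideanSpace ℝ (Fin n)) (he : Orthonormal ℝ e)
    (δ ε : ℝ)
    (hδ : δ < 10⁻¹ * ((10 : ℝ) ^ m + 1)⁻¹ / 2)
    (hε : ε < 10⁻¹ * ((10 : ℝ) ^ m + 1)⁻¹ / 2)
    (hhe : ∀ i, ‖h i - e i‖ ≤ δ) (hwh : ∀ i, ‖w i - h i‖ ≤ ε)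
    (H W : Submodule ℝ (EuclideanSpace ℝ (Fin n)))
    (hH : H = Submodule.span ℝ (Set.range h))
    (hW : W = Submodule.span ℝ (Set.range w)) :
    Module.finrank ℝ H = m ∧ Module.finrank ℝ W = m ∧
      ‖projL H - projL W‖ ≤ 14 * m * (20 : ℝ) ^ m * ε := by
  rcases Nat.eq_zero_or_pos m with hm | hm
  · subst hm
    have hrh : Set.range h = ∅ := Set.range_eq_empty _
    have hrw : Set.range w = ∅ := Set.range_eq_empty _
    rw [hrh, Submodule.span_empty] at hH
    rw [hrw, Submodule.span_empty] at hW
    subst hH hW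
    have h0 : projL (⊥ : Submodule ℝ (EuclideanSpace ℝ (Fin n))) = 0 := by
      ext z
      simp [projL_apply, Submodule.orthogonalProjectionOnto_bot]
    refine ⟨by simp, by simp, ?_⟩
    rw [h0, sub_self, norm_zero]
    norm_num
  · -- m ≥ 1
    have hδ0 : 0 ≤ δ := le_trans (norm_nonneg _) (hhe ⟨0, hm⟩)
    have hε0 : 0 ≤ ε := le_trans (norm_nonneg _) (hwh ⟨0, hm⟩)
    have hm10 : (m : ℝ) < (10 : ℝ) ^ m := by
      have := Nat.lt_pow_self (n := m) (a := 10) (by norm_num)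
      exact_mod_cast this
    have hp0 : (0 : ℝ) < (10 : ℝ) ^ m := by positivity
    have hmδ : (m : ℝ) * δ ≤ 1 / 2 := by
      have h1 : δ ≤ 10⁻¹ * ((10 : ℝ) ^ m + 1)⁻¹ := by
        have : (0 : ℝ) < 10⁻¹ * ((10 : ℝ) ^ m + 1)⁻¹ := by positivity
        linarith
      have h2 : (m : ℝ) * δ ≤ (10 : ℝ) ^ m * (10⁻¹ * ((10 : ℝ) ^ m + 1)⁻¹) := by
        apply mul_le_mul (le_of_lt hm10) h1 hδ0 (le_of_lt hp0)
      have h3 : (10 : ℝ) ^ m * (10⁻¹ * ((10 : ℝ) ^ m + 1)⁻¹) ≤ 1 / 2 := by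
        have hpos : (0 : ℝ) < (10 : ℝ) ^ m + 1 := by positivity
        rw [show (10 : ℝ) ^ m * (10⁻¹ * ((10 : ℝ) ^ m + 1)⁻¹)
            = (10 : ℝ) ^ m / (10 * ((10 : ℝ) ^ m + 1)) by field_simp]
        rw [div_le_iff₀ (by positivity)]
        nlinarith
      linarith
    have hmδε : (m : ℝ) * (δ + ε) ≤ 1 / 2 := by
      have h1 : δ + ε ≤ 10⁻¹ * ((10 : ℝ) ^ m + 1)⁻¹ := by linarith
      have h2 : (m : ℝ) * (δ + ε) ≤ (10 : ℝ) ^ m * (10⁻¹ * ((10 : ℝ) ^ m + 1)⁻¹) :=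
        mul_le_mul (le_of_lt hm10) h1 (by linarith) (le_of_lt hp0)
      have h3 : (10 : ℝ) ^ m * (10⁻¹ * ((10 : ℝ) ^ m + 1)⁻¹) ≤ 1 / 2 := by
        have hpos : (0 : ℝ) < (10 : ℝ) ^ m + 1 := by positivity
        rw [show (10 : ℝ) ^ m * (10⁻¹ * ((10 : ℝ) ^ m + 1)⁻¹)
            = (10 : ℝ) ^ m / (10 * ((10 : ℝ) ^ m + 1)) by field_simp]
        rw [div_le_iff₀ (by positivity)]
        nlinarith
      linarith
    have hwe : ∀ i, ‖w i - e i‖ ≤ δ + ε := fun i => by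
      calc ‖w i - e i‖ = ‖(w i - h i) + (h i - e i)‖ := by abel_nf
        _ ≤ ‖w i - h i‖ + ‖h i - e i‖ := norm_add_le _ _
        _ ≤ δ + ε := by have := hwh i; have := hhe i; linarith
    -- linear independence
    have lih : LinearIndependent ℝ h := by
      rw [Fintype.linearIndependent_iff]
      intro g hg i
      have := aux_lower he hδ0 hhe hmδ g
      rw [hg, norm_zero, mul_zero] at this
      have hsum : ∑ j, g j ^ 2 ≤ 0 := by
        by_contra hcon
        push_neg at hcon
        have := Real.sqrt_pos.2 hcon
        linarith
      have hz : ∑ j, g j ^ 2 = 0 :=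
        le_antisymm hsum (Finset.sum_nonneg fun j _ => sq_nonneg _)
      have := (Finset.sum_eq_zero_iff_of_nonneg (fun j _ => sq_nonneg (g j))).1 hz i
        (Finset.mem_univ i)
      exact pow_eq_zero_iff (by norm_num) |>.1 this
    have liw : LinearIndependent ℝ w := by
      rw [Fintype.linearIndependent_iff]
      intro g hg i
      have := aux_lower he (by linarith) hwe hmδε g
      rw [hg, norm_zero, mul_zero] at this
      have hsum : ∑ j, g j ^ 2 ≤ 0 := by
        by_contra hcon
        push_neg at hcon
        have := Real.sqrt_pos.2 hcon
        linarith
      have hz : ∑ j, g j ^ 2 = 0 :=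
        le_antisymm hsum (Finset.sum_nonneg fun j _ => sq_nonneg _)
      have := (Finset.sum_eq_zero_iff_of_nonneg (fun j _ => sq_nonneg (g j))).1 hz i
        (Finset.mem_univ i)
      exact pow_eq_zero_iff (by norm_num) |>.1 this
    have frH : Module.finrank ℝ H = m := by
      rw [hH, finrank_span_eq_card lih, Fintype.card_fin]
    have frW : Module.finrank ℝ W = m := by
      rw [hW, finrank_span_eq_card liw, Fintype.card_fin]
    refine ⟨frH, frW, ?_⟩
    set c : ℝ := 2 * m * ε with hc
    have hc0 : 0 ≤ c := by positivity
    -- distance from H to W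
    have key1 : ∀ x ∈ H, ‖x - projL W x‖ ≤ c * ‖x‖ := by
      intro x hx
      rw [hH] at hx
      obtain ⟨y, hyW, hxy⟩ := aux_dist he hδ0 hε0 hhe hmδ hwh hx
      calc ‖x - projL W x‖ ≤ ‖x - y‖ := aux_proj_le W x y (hW ▸ hyW)
        _ ≤ 2 * m * ε * ‖x‖ := hxy
    -- distance from W to H
    have key2 : ∀ x ∈ W, ‖x - projL H x‖ ≤ c * ‖x‖ := by
      intro x hx
      rw [hW] at hx
      have hhw : ∀ i, ‖h i - w i‖ ≤ ε := fun i => by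
        rw [norm_sub_rev]; exact hwh i
      obtain ⟨y, hyH, hxy⟩ := aux_dist he (by linarith) hε0 hwe hmδε hhw hx
      calc ‖x - projL H x‖ ≤ ‖x - y‖ := aux_proj_le H x y (hH ▸ hyH)
        _ ≤ 2 * m * ε * ‖x‖ := hxy
    -- cross bound
    have cross : ∀ z : EuclideanSpace ℝ (Fin n),
        ‖projL W (z - projL H z)‖ ≤ c * ‖z - projL H z‖ := by
      intro z
      set u := z - projL H z with hu
      rcases eq_or_ne (projL W u) 0 with h0 | h0
      · rw [h0, norm_zero]; positivity
      · have hsq : ‖projL W u‖ ^ 2 = ⟪projL W u, u⟫ := by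
          have horth : ⟪projL W u, u - projL W u⟫ = 0 :=
            Submodule.inner_right_of_mem_orthogonal (projL_mem W u)
              (Submodule.sub_starProjection_mem_orthogonal (K := W) u)
          have : ⟪projL W u, u⟫ = ⟪projL W u, projL W u⟫ + ⟪projL W u, u - projL W u⟫ := by
            rw [← inner_add_right]; congr 1; abel
          rw [this, horth, add_zero, real_inner_self_eq_norm_sq]
        have hHu : ⟪projL H (projL W u), u⟫ = 0 :=
          Submodule.inner_right_of_mem_orthogonal (projL_mem H (projL W u))
            (hu ▸ (Submodule.sub_starProjection_mem_orthogonal (K := H) z : z - projL H z ∈ Hᗮ))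
        have hsq2 : ‖projL W u‖ ^ 2 = ⟪projL W u - projL H (projL W u), u⟫ := by
          rw [inner_sub_left, hHu, sub_zero, hsq]
        have hle : ‖projL W u‖ ^ 2 ≤ ‖projL W u - projL H (projL W u)‖ * ‖u‖ := by
          rw [hsq2]; exact real_inner_le_norm _ _
        have hk2 : ‖projL W u - projL H (projL W u)‖ ≤ c * ‖projL W u‖ :=
          key2 _ (projL_mem W u)
        have hpos : 0 < ‖projL W u‖ := norm_pos_iff.2 h0
        nlinarith [norm_nonneg u]
    -- final bound
    have final : ∀ z : EuclideanSpace ℝ (Fin n),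
        ‖(projL H - projL W) z‖ ≤ 2 * c * ‖z‖ := by
      intro z
      have hdecomp : projL H z - projL W z
          = (projL H z - projL W (projL H z)) - projL W (z - projL H z) := by
        rw [map_sub]; abel
      have h1 : ‖projL H z - projL W (projL H z)‖ ≤ c * ‖projL H z‖ :=
        key1 _ (projL_mem H z)
      have h2 : ‖projL W (z - projL H z)‖ ≤ c * ‖z - projL H z‖ := cross z
      have h3 := aux_proj_norm_le H z
      calc ‖(projL H - projL W) z‖ = ‖projL H z - projL W z‖ := by
            rw [ContinuousLinearMap.sub_apply]
        _ = ‖(projL H z - projL W (projL H z)) - projL W (z - projL H z)‖ := by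
            rw [hdecomp]
        _ ≤ ‖projL H z - projL W (projL H z)‖ + ‖projL W (z - projL H z)‖ :=
            norm_sub_le _ _
        _ ≤ c * ‖projL H z‖ + c * ‖z - projL H z‖ := by linarith
        _ ≤ 2 * c * ‖z‖ := by nlinarith [h3.1, h3.2]
    have hop : ‖projL H - projL W‖ ≤ 2 * c :=
      ContinuousLinearMap.opNorm_le_bound _ (by positivity) final
    have hfin : 2 * c ≤ 14 * m * (20 : ℝ) ^ m * ε := by
      have h20 : (1 : ℝ) ≤ (20 : ℝ) ^ m := one_le_pow₀ (by norm_num)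
      have hm0 : (0 : ℝ) ≤ m := Nat.cast_nonneg m
      rw [hc]
      nlinarith
    linarith
end
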